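/- Let K ⊆ ℝⁿ be nonempty, closed, convex, f : ℝⁿ → ℝ convex differentiable, h(ξ) = Cξ + d with C of full row rank, and τ > 0. Suppose (ξ*, z*) satisfies ξ* = Π_K(ξ* − τ∇f(ξ*) − τCᵀλ*) and Cξ* + d = 0, where λ* = (CCᵀ)⁻¹(−C∇f(ξ*) − k_p h(ξ*) − k_i z*). Then ξ* is a global minimizer of f over the set K ∩ {ξ : Cξ + d = 0}, provided this set is nonempty and Slater-type regularity holds (the affine constraint intersects the relative interior of K). -/

import Mathlib

set_option maxHeartbeats 1000000

open Matrix

/-- Gradient inequality for convex functions: `f y ≥ f x + ⟪∇f x, y - x⟫`. -/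
lemma grad_ineq {n : ℕ} (f : EuclideanSpace ℝ (Fin n) → ℝ)
    (hconv : ConvexOn ℝ Set.univ f) (x y : EuclideanSpace ℝ (Fin n))
    (g : EuclideanSpace ℝ (Fin n)) (hg : HasGradientAt f g x) :
    f x + inner ℝ g (y - x) ≤ f y := by
  set v : EuclideanSpace ℝ (Fin n) := y - x with hv
  set A : ℝ →ᵃ[ℝ] EuclideanSpace ℝ (Fin n) := AffineMap.lineMap x y with hA
  have hAval : ∀ t : ℝ, A t = x + t • v := by
    intro t
    rw [hA, AffineMap.lineMap_apply_module, hv]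
    module
  have hgc : ConvexOn ℝ (A ⁻¹' Set.univ) (f ∘ A) := hconv.comp_affineMap A
  rw [Set.preimage_univ] at hgc
  have hcomp : (f ∘ A) = fun t => f (x + t • v) := funext fun t => by
    simp [Function.comp, hAval t]
  rw [hcomp] at hgc
  have hc : HasDerivAt (fun t : ℝ => x + t • v) v 0 := by
    simpa using ((hasDerivAt_id (0:ℝ)).smul_const v).const_add x
  have hF : HasFDerivAt f (InnerProductSpace.toDual ℝ _ g) x := hg.hasFDerivAt
  have hF' : HasFDerivAt f (InnerProductSpace.toDual ℝ _ g) ((fun t : ℝ => x + t • v) 0) := by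
    simpa using hF
  have hfd : HasDerivAt (fun t : ℝ => f (x + t • v)) (inner ℝ g v) 0 := by
    have := hF'.comp_hasDerivAt 0 hc
    simp only [InnerProductSpace.toDual_apply_apply] at this; exact this
  have hs := ConvexOn.le_slope_of_hasDerivAt hgc (Set.mem_univ (0:ℝ))
    (Set.mem_univ (1:ℝ)) one_pos hfd
  rw [slope_def_field] at hs
  simp only [zero_smul, add_zero, one_smul, sub_zero, div_one] at hs
  have h1 : x + v = y := by simp [hv]
  rw [h1] at hs
  linarith

/-- Equilibria of the Proj-FL-CMO dynamics are global minimizers: if `(ξ*, z*)` is a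
fixed point of the projected update with controlled multiplier `λ*`, and `ξ*` is feasible,
then under Slater-type regularity `ξ*` minimizes the convex `f` over `K ∩ {Cξ + d = 0}`. -/
theorem projFLCMO_equilibrium_is_minimizer (n m : ℕ)
    (K : Set (EuclideanSpace ℝ (Fin n)))
    (hne : K.Nonempty) (hcl : IsClosed K) (hcv : Convex ℝ K)
    (proj : EuclideanSpace ℝ (Fin n) → EuclideanSpace ℝ (Fin n))
    (hproj : ∀ x, proj x ∈ K ∧ ∀ y ∈ K, ‖x - proj x‖ ≤ ‖x - y‖)
    (f : EuclideanSpace ℝ (Fin n) → ℝ)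
    (f' : EuclideanSpace ℝ (Fin n) → EuclideanSpace ℝ (Fin n))
    (hconv : ConvexOn ℝ Set.univ f) (hgrad : ∀ x, HasGradientAt f (f' x) x)
    (C : Matrix (Fin m) (Fin n) ℝ) (hC : LinearIndependent ℝ (fun i => C i))
    (d : Fin m → ℝ) (kp ki τ : ℝ) (hkp : 0 < kp) (hki : 0 < ki) (hτ : 0 < τ)
    (ξs : EuclideanSpace ℝ (Fin n)) (zs : Fin m → ℝ) (lams : Fin m → ℝ)
    (hlam : lams = (C * Cᵀ)⁻¹.mulVec
      (-(C.mulVec (f' ξs)) - kp • (C.mulVec ξs + d) - ki • zs))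
    (hfix : ξs = proj (ξs - τ • f' ξs - τ • (show EuclideanSpace ℝ (Fin n) from WithLp.toLp 2 (Cᵀ.mulVec lams))))
    (hfeas : C.mulVec ξs + d = 0)
    (hslater : ∃ ξ₀, ξ₀ ∈ intrinsicInterior ℝ K ∧ C.mulVec ξ₀ + d = 0) :
    ∀ y ∈ K, C.mulVec y + d = 0 → f ξs ≤ f y := by
  intro y hyK hyfeas
  set w : EuclideanSpace ℝ (Fin n) := WithLp.toLp 2 (Cᵀ.mulVec lams) with hw
  set x : EuclideanSpace ℝ (Fin n) := ξs - τ • f' ξs - τ • w with hx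
  obtain ⟨hpK, hpmin⟩ := hproj x
  have hξK : ξs ∈ K := hfix ▸ hpK
  haveI : Nonempty ↑K := ⟨⟨ξs, hξK⟩⟩
  have heq : ‖x - ξs‖ = ⨅ z : K, ‖x - (z:EuclideanSpace ℝ (Fin n))‖ := by
    refine le_antisymm (le_ciInf fun z => ?_) (ciInf_le (f := fun z : K => ‖x - (z:EuclideanSpace ℝ (Fin n))‖) ⟨0, ?_⟩ ⟨ξs, hξK⟩)
    · rw [hfix]; exact hpmin z z.2
    · rintro _ ⟨z, rfl⟩; positivity
  have hVI : ∀ z ∈ K, inner ℝ (x - ξs) (z - ξs) ≤ (0:ℝ) :=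
    (norm_eq_iInf_iff_real_inner_le_zero hcv hξK).mp heq
  have hVIy := hVI y hyK
  have hCyx : C.mulVec (y - ξs) = 0 := by
    have h1 : C.mulVec y = -d := eq_neg_of_add_eq_zero_left hyfeas
    have h2 : C.mulVec ξs = -d := eq_neg_of_add_eq_zero_left hfeas
    have h3 : C.mulVec (y - ξs) = C.mulVec y - C.mulVec ξs := Matrix.mulVec_sub C y ξs
    rw [h3, h1, h2, sub_self]
  have hinner_w : (inner ℝ w (y - ξs) : ℝ) = 0 := by
    have he : (inner ℝ w (y - ξs) : ℝ) = ∑ j, w j * (y - ξs) j := by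
      simp [PiLp.inner_apply, RCLike.inner_apply, mul_comm]
    rw [he]
    have hwj : ∀ j, w j = ∑ i, C i j * lams i := by
      intro j; simp [hw, Matrix.mulVec, dotProduct, Matrix.transpose_apply]
    calc ∑ j, w j * (y - ξs) j
        = ∑ j, ∑ i, C i j * lams i * (y - ξs) j := by
          refine Finset.sum_congr rfl fun j _ => ?_
          rw [hwj j, Finset.sum_mul]
      _ = ∑ i, lams i * (C.mulVec (y - ξs) i) := by
          rw [Finset.sum_comm]
          refine Finset.sum_congr rfl fun i _ => ?_
          simp only [Matrix.mulVec, dotProduct, Finset.mul_sum]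
          exact Finset.sum_congr rfl fun j _ => by rw [WithLp.ofLp_sub]; ring
      _ = 0 := by simp [hCyx]
  have hxsub : x - ξs = -(τ • f' ξs) - τ • w := by
    rw [hx]; abel
  have hinner : (inner ℝ (x - ξs) (y - ξs) : ℝ)
      = -(τ * inner ℝ (f' ξs) (y - ξs)) - τ * inner ℝ w (y - ξs) := by
    rw [hxsub, inner_sub_left, inner_neg_left, real_inner_smul_left,
      real_inner_smul_left]
  rw [hinner, hinner_w] at hVIy
  have hgrad_nonneg : (0:ℝ) ≤ inner ℝ (f' ξs) (y - ξs) := by nlinarith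
  have := grad_ineq f hconv ξs y (f' ξs) (hgrad ξs)
  linarith
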